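/- arXiv:2207.00024 — 2 statements merged into one kernel-verified Lean document; each statement's English description precedes it below -/
import Mathlib

section
/- Every trace-zero matrix over ℂ is a commutator: if a ∈ M_n(ℂ) with tr(a) = 0, then there exist b, c ∈ M_n(ℂ) with a = bc − cb. -/
open Matrix


lemma diagZero_comm (N : ℕ) (a : Matrix (Fin N) (Fin N) ℂ) (h : ∀ i, a i i = 0) :
    ∃ b c : Matrix (Fin N) (Fin N) ℂ, a = b * c - c * b := by
  refine ⟨Matrix.diagonal (fun i => (i : ℂ)),
    Matrix.of (fun i j => if i = j then 0 else a i j / ((i : ℂ) - (j : ℂ))), ?_⟩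
  ext i j
  rw [Matrix.sub_apply, Matrix.diagonal_mul, Matrix.mul_diagonal]
  by_cases hij : i = j
  · subst hij; simp [h i]
  · have hne : (i : ℂ) - (j : ℂ) ≠ 0 := by
      have : (i : ℂ) ≠ (j : ℂ) := by
        simpa [Fin.ext_iff] using fun hc => hij (Fin.ext hc)
      exact sub_ne_zero.mpr this
    simp only [Matrix.of_apply, if_neg hij]
    field_simp

lemma exists_not_mem_span (N : ℕ) (a : Matrix (Fin N) (Fin N) ℂ)
    (ha : ¬ ∃ c : ℂ, a = c • (1 : Matrix (Fin N) (Fin N) ℂ)) (hN : 0 < N) :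
    ∃ v : Fin N → ℂ, a.mulVec v ∉ Submodule.span ℂ {v} := by
  by_contra hc
  push_neg at hc
  apply ha
  -- each column is a multiple of the corresponding basis vector
  have hcol : ∀ j i : Fin N, i ≠ j → a i j = 0 := by
    intro j i hij
    obtain ⟨r, hr⟩ := (Submodule.mem_span_singleton).mp (hc (Pi.single j 1))
    have := congrFun hr i
    simp [Matrix.mulVec_single, Pi.single_apply, hij] at this
    simpa [Matrix.mulVec_single, hij] using (congrFun hr.symm i).trans (by
      simp [Pi.single_apply, hij])
  have hdiag : ∀ i j : Fin N, a i i = a j j := by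
    intro i j
    by_cases hij : i = j
    · rw [hij]
    · obtain ⟨r, hr⟩ := (Submodule.mem_span_singleton).mp
        (hc (Pi.single i 1 + Pi.single j 1))
      have hmv : a.mulVec (Pi.single i 1 + Pi.single j 1) =
          (fun k => a k i) + (fun k => a k j) := by
        rw [Matrix.mulVec_add]
        ext k
        simp [Matrix.mulVec_single]
      rw [hmv] at hr
      have hi := congrFun hr i
      have hj := congrFun hr j
      simp [Pi.single_apply, hij, Ne.symm hij] at hi hj
      rw [hcol j i hij] at hi
      rw [hcol i j (Ne.symm hij)] at hj
      simp at hi hj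
      rw [← hi, ← hj]
  refine ⟨a ⟨0, hN⟩ ⟨0, hN⟩, ?_⟩
  ext i j
  by_cases hij : i = j
  · subst hij
    simp [Matrix.smul_apply, hdiag i ⟨0, hN⟩]
  · simp [Matrix.smul_apply, hcol j i hij, Matrix.one_apply, hij]

lemma exists_basis_pair (n : ℕ) (v w : Fin (n+2) → ℂ)
    (hv : v ≠ 0) (hw : w ∉ Submodule.span ℂ {v}) :
    ∃ b : Module.Basis (Fin (n+2)) ℂ (Fin (n+2) → ℂ), b 0 = v ∧ b 1 = w := by
  have hvw : v ≠ w := fun h => hw (h ▸ Submodule.mem_span_singleton_self v)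
  have hli : LinearIndepOn ℂ id ({v, w} : Set (Fin (n+2) → ℂ)) := by
    rw [Set.pair_comm]
    refine ((linearIndepOn_singleton_iff ℂ).mpr hv).id_insert ?_
    simpa using hw
  let s := hli.extend (Set.subset_univ _)
  let b0 : Module.Basis s ℂ (Fin (n+2) → ℂ) := Module.Basis.extend hli
  haveI : Fintype s := FiniteDimensional.fintypeBasisIndex b0
  have hcard : Fintype.card (Fin (n+2)) = Fintype.card s := by
    rw [Fintype.card_fin, ← Module.finrank_eq_card_basis b0, Module.finrank_fin_fun]
  have hsub : {v, w} ⊆ s := hli.subset_extend _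
  have hvs : v ∈ s := hsub (Set.mem_insert _ _)
  have hws : w ∈ s := hsub (Set.mem_insert_of_mem _ rfl)
  obtain ⟨e⟩ : Nonempty (Fin (n+2) ≃ s) := ⟨Fintype.equivOfCardEq hcard⟩
  -- adjust e so that e 0 = v, e 1 = w
  let e1 : Fin (n+2) ≃ s := (Equiv.swap 0 (e.symm ⟨v, hvs⟩)).trans e
  have he1 : e1 0 = ⟨v, hvs⟩ := by simp [e1]
  have hne : e1.symm ⟨w, hws⟩ ≠ 0 := by
    intro hcon
    have : e1 0 = ⟨w, hws⟩ := by rw [← hcon]; simp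
    rw [he1] at this
    exact hvw (by simpa using congrArg Subtype.val this)
  let e2 : Fin (n+2) ≃ s := (Equiv.swap 1 (e1.symm ⟨w, hws⟩)).trans e1
  have he2w : e2 1 = ⟨w, hws⟩ := by simp [e2]
  have he2v : e2 0 = ⟨v, hvs⟩ := by
    have h01 : (0 : Fin (n+2)) ≠ 1 := by
      simp [Fin.ext_iff, Fin.val_zero, Fin.val_one]
    simp only [e2, Equiv.trans_apply]
    rw [Equiv.swap_apply_of_ne_of_ne h01 (fun h => hne h.symm)]
    exact he1
  refine ⟨b0.reindex e2.symm, ?_, ?_⟩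
  · rw [Module.Basis.reindex_apply]
    simp only [Equiv.symm_symm, he2v]
    exact Module.Basis.extend_apply_self hli _
  · rw [Module.Basis.reindex_apply]
    simp only [Equiv.symm_symm, he2w]
    exact Module.Basis.extend_apply_self hli _

lemma toMatrix_conj (N : ℕ) (a : Matrix (Fin N) (Fin N) ℂ)
    (b : Module.Basis (Fin N) ℂ (Fin N → ℂ)) :
    ∃ u : (Matrix (Fin N) (Fin N) ℂ)ˣ,
      LinearMap.toMatrix b b (Matrix.toLin (Pi.basisFun ℂ (Fin N)) (Pi.basisFun ℂ (Fin N)) a)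
        = (u : Matrix (Fin N) (Fin N) ℂ) * a * ((u⁻¹ : (Matrix (Fin N) (Fin N) ℂ)ˣ) : Matrix (Fin N) (Fin N) ℂ) := by
  set bF := Pi.basisFun ℂ (Fin N)
  set f := Matrix.toLin bF bF a with hf
  have key : bF.toMatrix b * LinearMap.toMatrix b b f * b.toMatrix bF = a := by
    rw [basis_toMatrix_mul_linearMap_toMatrix_mul_basis_toMatrix, LinearMap.toMatrix_toLin]
  have h1 : bF.toMatrix b * b.toMatrix bF = 1 := Module.Basis.toMatrix_mul_toMatrix_flip _ _
  have h2 : b.toMatrix bF * bF.toMatrix b = 1 := Module.Basis.toMatrix_mul_toMatrix_flip _ _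
  refine ⟨⟨b.toMatrix bF, bF.toMatrix b, h2, h1⟩, ?_⟩
  have main : LinearMap.toMatrix b b f = b.toMatrix bF * a * bF.toMatrix b := by
    rw [← key]
    rw [show b.toMatrix ⇑bF * (bF.toMatrix ⇑b * LinearMap.toMatrix b b f * b.toMatrix ⇑bF) *
        bF.toMatrix ⇑b = (b.toMatrix ⇑bF * bF.toMatrix ⇑b) * LinearMap.toMatrix b b f *
        (b.toMatrix ⇑bF * bF.toMatrix ⇑b) by simp only [mul_assoc]]
    rw [h2, one_mul, mul_one]
  simpa only [Units.inv_mk, Units.val_mk] using main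

lemma block_step (m : ℕ) (M : Matrix (Fin (m+2)) (Fin (m+2)) ℂ)
    (hM : M.trace = 0) (h00 : M 0 0 = 0)
    (IH : ∀ D : Matrix (Fin (m+1)) (Fin (m+1)) ℂ, D.trace = 0 →
      ∃ q : (Matrix (Fin (m+1)) (Fin (m+1)) ℂ)ˣ,
        ∀ i, ((q : Matrix (Fin (m+1)) (Fin (m+1)) ℂ) * D *
          ((q⁻¹ : (Matrix (Fin (m+1)) (Fin (m+1)) ℂ)ˣ) : Matrix (Fin (m+1)) (Fin (m+1)) ℂ)) i i = 0) :
    ∃ u : (Matrix (Fin (m+2)) (Fin (m+2)) ℂ)ˣ,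
      ∀ i, ((u : Matrix (Fin (m+2)) (Fin (m+2)) ℂ) * M *
        ((u⁻¹ : (Matrix (Fin (m+2)) (Fin (m+2)) ℂ)ˣ) : Matrix (Fin (m+2)) (Fin (m+2)) ℂ)) i i = 0 := by
  set E : Fin 1 ⊕ Fin (m+1) ≃ Fin (m+2) :=
    finSumFinEquiv.trans (finCongr (by omega : 1 + (m+1) = m+2)) with hE
  set m' := M.submatrix E E with hm'
  set ψ := Matrix.reindexAlgEquiv ℂ ℂ E with hψ
  have hψm' : ψ m' = M := by
    ext i j
    simp [hψ, hm', Matrix.reindexAlgEquiv_apply, Matrix.reindex_apply]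
  have hE0 : E (Sum.inl 0) = 0 := by simp [hE, Fin.ext_iff]
  have hm'00 : m' (Sum.inl 0) (Sum.inl 0) = 0 := by
    rw [hm', Matrix.submatrix_apply, hE0]; exact h00
  -- trace of the lower-right block is zero
  have htr : (toBlocks₂₂ m').trace = 0 := by
    have h1 : m'.trace = M.trace := by
      rw [hm', Matrix.trace, Matrix.trace]
      simp only [Matrix.diag, Matrix.submatrix_apply]
      exact Equiv.sum_comp E (fun i => M i i)
    have h2 : m'.trace = m' (Sum.inl 0) (Sum.inl 0) + (toBlocks₂₂ m').trace := by
      rw [Matrix.trace]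
      rw [show (Finset.univ.sum m'.diag) = ∑ s : Fin 1 ⊕ Fin (m+1), m' s s from rfl]
      rw [Fintype.sum_sum_type]
      simp [Matrix.trace, Matrix.diag, Matrix.toBlocks₂₂]
    rw [h2, hm'00, zero_add] at h1
    rw [h1, hM]
  obtain ⟨q, hq⟩ := IH (toBlocks₂₂ m') htr
  set q' : Matrix (Fin (m+1)) (Fin (m+1)) ℂ :=
    ((q⁻¹ : (Matrix (Fin (m+1)) (Fin (m+1)) ℂ)ˣ) : Matrix (Fin (m+1)) (Fin (m+1)) ℂ) with hq'
  set U := (fromBlocks 1 0 0 (q : Matrix (Fin (m+1)) (Fin (m+1)) ℂ) :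
    Matrix (Fin 1 ⊕ Fin (m+1)) (Fin 1 ⊕ Fin (m+1)) ℂ) with hU
  set U' := (fromBlocks 1 0 0 q' : Matrix (Fin 1 ⊕ Fin (m+1)) (Fin 1 ⊕ Fin (m+1)) ℂ) with hU'
  have hUU' : U * U' = 1 := by
    rw [hU, hU', fromBlocks_multiply]
    rw [show (q : Matrix (Fin (m+1)) (Fin (m+1)) ℂ) * q' = 1 from Units.mul_inv q]
    simp [← Matrix.fromBlocks_one]
  have hU'U : U' * U = 1 := by
    rw [hU, hU', fromBlocks_multiply]
    rw [show q' * (q : Matrix (Fin (m+1)) (Fin (m+1)) ℂ) = 1 from Units.inv_mul q]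
    simp [← Matrix.fromBlocks_one]
  set r := U * m' * U' with hr
  have hrdiag : ∀ s, r s s = 0 := by
    intro s
    have hblock : r = fromBlocks m'.toBlocks₁₁ (m'.toBlocks₁₂ * q')
        ((q : Matrix (Fin (m+1)) (Fin (m+1)) ℂ) * m'.toBlocks₂₁)
        ((q : Matrix (Fin (m+1)) (Fin (m+1)) ℂ) * m'.toBlocks₂₂ * q') := by
      rw [hr, hU, hU']
      conv_lhs => rw [← Matrix.fromBlocks_toBlocks m']
      rw [fromBlocks_multiply, fromBlocks_multiply]
      simp [Matrix.mul_assoc]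
    cases s with
    | inl i =>
      rw [hblock, Matrix.fromBlocks_apply₁₁]
      have : i = 0 := Subsingleton.elim _ _
      subst this
      simpa [Matrix.toBlocks₁₁] using hm'00
    | inr i =>
      rw [hblock, Matrix.fromBlocks_apply₂₂]
      exact hq i
  refine ⟨Units.mk (ψ U) (ψ U') (by rw [← _root_.map_mul, hUU', _root_.map_one])
    (by rw [← _root_.map_mul, hU'U, _root_.map_one]), ?_⟩
  intro i
  simp only [Units.inv_mk, Units.val_mk]
  have h3 : ψ U * M * ψ U' = ψ r := by rw [hr, ← hψm', ← _root_.map_mul, ← _root_.map_mul]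
  rw [h3]
  have h4 : (ψ r) i i = r (E.symm i) (E.symm i) := by
    simp [hψ, Matrix.reindexAlgEquiv_apply, Matrix.reindex_apply]
  rw [h4]
  exact hrdiag _
lemma sim_diagZero : ∀ (N : ℕ) (a : Matrix (Fin N) (Fin N) ℂ), a.trace = 0 →
    ∃ u : (Matrix (Fin N) (Fin N) ℂ)ˣ,
      ∀ i, ((u : Matrix (Fin N) (Fin N) ℂ) * a *
        ((u⁻¹ : (Matrix (Fin N) (Fin N) ℂ)ˣ) : Matrix (Fin N) (Fin N) ℂ)) i i = 0 := by
  intro N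
  induction N with
  | zero => exact fun a _ => ⟨1, fun i => i.elim0⟩
  | succ n IH =>
    intro a ha
    by_cases hsc : ∃ c : ℂ, a = c • (1 : Matrix (Fin (n+1)) (Fin (n+1)) ℂ)
    · obtain ⟨c, rfl⟩ := hsc
      have hc : c = 0 := by
        rw [trace_smul, trace_one] at ha
        simp only [smul_eq_mul] at ha
        have : (Fintype.card (Fin (n+1)) : ℂ) ≠ 0 := by
          simp [Fintype.card_fin]
          exact_mod_cast Nat.succ_ne_zero n
        exact (mul_eq_zero.mp ha).resolve_right this
      subst hc
      exact ⟨1, fun i => by simp⟩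
    · match n, a, ha, hsc, IH with
      | 0, a, ha, hsc, IH =>
        exact absurd ⟨a 0 0, by
          ext i j
          have hi : i = 0 := Fin.ext (by omega)
          have hj : j = 0 := Fin.ext (by omega)
          subst hi; subst hj
          simp [Matrix.one_apply]⟩ hsc
      | (m+1), a, ha, hsc, IH =>
        obtain ⟨v, hv⟩ := exists_not_mem_span (m+2) a hsc (by omega)
        have hv0 : v ≠ 0 := by
          intro h
          apply hv
          rw [h, Matrix.mulVec_zero]
          exact Submodule.zero_mem _
        obtain ⟨b, hb0, hb1⟩ := exists_basis_pair m v (a.mulVec v) hv0 hv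
        obtain ⟨u₀, hu₀⟩ := toMatrix_conj (m+2) a b
        set bF := Pi.basisFun ℂ (Fin (m+2)) with hbF
        set M := LinearMap.toMatrix b b (Matrix.toLin bF bF a) with hM
        have hM00 : M 0 0 = 0 := by
          rw [hM, LinearMap.toMatrix_apply, hb0, hbF, Matrix.toLin_eq_toLin',
            Matrix.toLin'_apply, ← hb1, Module.Basis.repr_self]
          simp [Finsupp.single_apply]
        have hMtr : M.trace = 0 := by
          rw [hu₀, Matrix.trace_mul_cycle]
          rw [Units.inv_mul, one_mul, ha]
        obtain ⟨u1, hu1⟩ := block_step m M hMtr hM00 IH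
        refine ⟨u1 * u₀, fun i => ?_⟩
        have : ((u1 * u₀ : (Matrix (Fin (m+2)) (Fin (m+2)) ℂ)ˣ) : Matrix (Fin (m+2)) (Fin (m+2)) ℂ) * a *
            (((u1 * u₀)⁻¹ : (Matrix (Fin (m+2)) (Fin (m+2)) ℂ)ˣ) : Matrix (Fin (m+2)) (Fin (m+2)) ℂ) =
            (u1 : Matrix (Fin (m+2)) (Fin (m+2)) ℂ) * M *
            ((u1⁻¹ : (Matrix (Fin (m+2)) (Fin (m+2)) ℂ)ˣ) : Matrix (Fin (m+2)) (Fin (m+2)) ℂ) := by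
          rw [hu₀, _root_.mul_inv_rev, Units.val_mul, Units.val_mul]
          simp only [mul_assoc]
        rw [this]
        exact hu1 i

/-- Shoda's theorem: every trace-zero complex matrix is a commutator. -/
theorem trace_zero_iff_commutator (n : ℕ) (a : Matrix (Fin n) (Fin n) ℂ)
    (h : a.trace = 0) :
    ∃ b c : Matrix (Fin n) (Fin n) ℂ, a = b * c - c * b := by
  obtain ⟨u, hu⟩ := sim_diagZero n a h
  set d := (u : Matrix (Fin n) (Fin n) ℂ) * a *
    ((u⁻¹ : (Matrix (Fin n) (Fin n) ℂ)ˣ) : Matrix (Fin n) (Fin n) ℂ) with hd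
  obtain ⟨b, c, hbc⟩ := diagZero_comm n d hu
  set v := (u : Matrix (Fin n) (Fin n) ℂ) with hv
  set v' := ((u⁻¹ : (Matrix (Fin n) (Fin n) ℂ)ˣ) : Matrix (Fin n) (Fin n) ℂ) with hv'
  refine ⟨v' * b * v, v' * c * v, ?_⟩
  have key : ∀ x y : Matrix (Fin n) (Fin n) ℂ,
      (v' * x * v) * (v' * y * v) = v' * (x * y) * v := by
    intro x y
    simp only [hv, hv', mul_assoc, Units.mul_inv_cancel_left]
  rw [key, key, ← Matrix.sub_mul, ← Matrix.mul_sub, ← hbc, hd]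
  simp only [hv, hv', mul_assoc, Units.inv_mul_cancel_left]
  rw [Units.inv_mul, mul_one]
end

section
/- For a completely positive map φ : M_n(ℂ) → M_m(ℂ) of the 'measure-and-prepare' form φ(a) = Σ_k E_k · tr(F_k a) with E_k positive semidefinite and (|ξ_k⟩)_k an orthonormal family with F_k = |ξ_k⟩⟨ξ_k|, the Choi matrix ρ_φ = Σ_{ij} E_{ij} ⊗ φ(E_{ij}) is a separable operator, i.e., a positive linear combination of tensor products of positive semidefinite matrices. -/
open Matrix Finset Kronecker
open scoped ComplexOrder

/-- A bipartite operator is separable if it is a positive linear combination of tensor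
(Kronecker) products of positive semidefinite matrices. -/
def SeparableOp {n m : ℕ} (ρ : Matrix (Fin n × Fin m) (Fin n × Fin m) ℂ) : Prop :=
  ∃ (L : ℕ) (p : Fin L → ℝ) (A : Fin L → Matrix (Fin n) (Fin n) ℂ)
    (B : Fin L → Matrix (Fin m) (Fin m) ℂ),
    (∀ l, 0 ≤ p l) ∧ (∀ l, (A l).PosSemidef) ∧ (∀ l, (B l).PosSemidef) ∧
    ρ = ∑ l, ((p l : ℂ) • (A l ⊗ₖ B l))

/-- The Choi matrix of a measure-and-prepare channel
`φ(a) = ∑ₖ Eₖ · tr(Fₖ a)`, with `Eₖ ⪰ 0` and `Fₖ = |ξₖ⟩⟨ξₖ|` for an orthonormal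
family `(ξₖ)`, is a separable operator. -/
theorem choi_of_measure_prepare_separable
    (n m K : ℕ)
    (E : Fin K → Matrix (Fin m) (Fin m) ℂ) (hE : ∀ k, (E k).PosSemidef)
    (ξ : Fin K → (Fin n → ℂ))
    (hortho : ∀ k l, dotProduct (star (ξ k)) (ξ l) = if k = l then 1 else 0)
    (φ : Matrix (Fin n) (Fin n) ℂ → Matrix (Fin m) (Fin m) ℂ)
    (hφ : ∀ a, φ a =
      ∑ k, (Matrix.trace (Matrix.vecMulVec (ξ k) (star (ξ k)) * a)) • E k) :
    SeparableOp (∑ i, ∑ j,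
      (Matrix.single i j (1 : ℂ)) ⊗ₖ φ (Matrix.single i j (1 : ℂ))) := by
  refine ⟨K, fun _ => 1, fun k => Matrix.vecMulVec (star (ξ k)) (ξ k), E,
    fun _ => zero_le_one, fun k => ?_, hE, ?_⟩
  · rw [Matrix.posSemidef_iff_dotProduct_mulVec]; constructor
    · ext i j
      simp [Matrix.conjTranspose_apply, Matrix.vecMulVec_apply, mul_comm]
    · intro x
      have : star x ⬝ᵥ (Matrix.vecMulVec (star (ξ k)) (ξ k)) *ᵥ x
          = star ((ξ k) ⬝ᵥ x) * ((ξ k) ⬝ᵥ x) := by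
        simp only [dotProduct, Matrix.mulVec, Matrix.vecMulVec_apply, Pi.star_apply,
          Finset.mul_sum, Finset.sum_mul, star_sum, star_mul']
        rw [Finset.sum_comm]
        apply Finset.sum_congr rfl; intro i _
        apply Finset.sum_congr rfl; intro j _
        ring
      rw [this]
      exact star_mul_self_nonneg _
  · ext ⟨i, a⟩ ⟨j, b⟩
    simp only [hφ, Matrix.sum_apply, Matrix.kroneckerMap_apply, Matrix.smul_apply,
      Matrix.single, Matrix.of_apply, Matrix.trace, Matrix.diag,
      Matrix.mul_apply, Matrix.vecMulVec_apply, Complex.ofReal_one, one_smul,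
      smul_eq_mul, Pi.star_apply, RCLike.star_def]
    simp only [mul_ite, ite_mul, one_mul, zero_mul, mul_zero, mul_one, ite_and,
      Finset.sum_ite_irrel, Finset.sum_ite_eq, Finset.sum_ite_eq', Finset.mem_univ, if_true]
    simp only [Finset.sum_const_zero, Finset.sum_ite_eq, Finset.sum_ite_eq',
      Finset.mem_univ, if_true]
    exact Finset.sum_congr rfl fun k _ => by ring
end
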